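/- arXiv:0907.3511 — 4 statements merged into one kernel-verified Lean document; each statement's English description precedes it below -/
import Mathlib

section
/- For fixed b with 0 < b < 1/4, the integral over nonnegative x_1,...,x_5 of max(b x_1 + b x_2 + b x_4 + b x_5, b x_2 + (1-4b) x_3 + b x_5) · e^{-(x_1+x_2+x_3+x_4+x_5)} restricted to the region x_1 ≤ x_2 and x_4 ≤ x_5, multiplied by 4, equals 4(1-3b)(5b² - 5b + 1)/(7b - 2)². -/
open MeasureTheory Real Set Filter

lemma antideriv (d a q : ℝ) (hd : d ≠ 0) (x : ℝ) :
    HasDerivAt (fun x => -((a + q*x)/d + q/d^2) * Real.exp (-(d*x)))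
      ((a + q*x) * Real.exp (-(d*x))) x := by
  have h1 : HasDerivAt (fun x : ℝ => -((a + q*x)/d + q/d^2)) (-(q/d)) x := by
    have := ((hasDerivAt_const x a).add ((hasDerivAt_id x).const_mul q)).div_const d
    exact ((this.add_const (q/d^2)).neg).congr_deriv (by ring)
  have h2 : HasDerivAt (fun x : ℝ => Real.exp (-(d*x))) (-d * Real.exp (-(d*x))) x := by
    have h : HasDerivAt (fun x : ℝ => -(d*x)) (-d) x := by
      exact (((hasDerivAt_id x).const_mul d).neg).congr_deriv (by ring)
    simpa [mul_comm] using h.exp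
  have := h1.mul h2
  refine this.congr_deriv ?_
  field_simp
  ring

lemma tendsto0 (d a q : ℝ) (hd : 0 < d) :
    Tendsto (fun x => -((a + q*x)/d + q/d^2) * Real.exp (-(d*x))) atTop (nhds 0) := by
  have hx : Tendsto (fun x : ℝ => d * x) atTop atTop :=
    Tendsto.const_mul_atTop hd tendsto_id
  have h1 : Tendsto (fun x : ℝ => Real.exp (-(d*x))) atTop (nhds 0) :=
    (Real.tendsto_exp_neg_atTop_nhds_zero).comp hx
  have h2 : Tendsto (fun x : ℝ => (d*x) * Real.exp (-(d*x))) atTop (nhds 0) := by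
    have := (Real.tendsto_pow_mul_exp_neg_atTop_nhds_zero 1).comp hx
    simpa [Function.comp_def] using this
  have h3 : Tendsto (fun x : ℝ => -((a/d + q/d^2) * Real.exp (-(d*x)) + (q/d^2) * ((d*x) * Real.exp (-(d*x))))) atTop (nhds 0) := by
    have := ((h1.const_mul (a/d + q/d^2)).add (h2.const_mul (q/d^2))).neg
    simpa using this
  convert h3 using 2 with x
  field_simp
  ring

lemma integrableOn_atom (d a q t : ℝ) (hd : 0 < d) (ht : 0 ≤ t) :
    IntegrableOn (fun x => (a + q*x) * Real.exp (-(d*x))) (Set.Ioi t) := by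
  have hxexp : IntegrableOn (fun x => (0 + 1*x) * Real.exp (-(d*x))) (Set.Ioi t) := by
    exact integrableOn_Ioi_deriv_of_nonneg
      ((antideriv d 0 1 hd.ne' t).continuousAt.continuousWithinAt)
      (fun x _ => antideriv d 0 1 hd.ne' x)
      (fun x hx => by
        have : t < x := hx
        have := Real.exp_pos (-(d*x))
        nlinarith)
      (tendsto0 d 0 1 hd)
  have hexp : IntegrableOn (fun x => Real.exp (-(d*x))) (Set.Ioi t) := by
    have := exp_neg_integrableOn_Ioi t hd
    simpa [neg_mul] using this
  have h2 : IntegrableOn (fun x => a * Real.exp (-(d*x)) + q * ((0 + 1*x) * Real.exp (-(d*x)))) (Set.Ioi t) :=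
    (hexp.const_mul a).add ((hxexp.const_mul q))
  exact h2.congr_fun (fun x _ => by simp; ring) measurableSet_Ioi

lemma int_Ioi (d a q t : ℝ) (hd : 0 < d) (ht : 0 ≤ t) :
    ∫ x in Set.Ioi t, (a + q*x) * Real.exp (-(d*x))
      = ((a + q*t)/d + q/d^2) * Real.exp (-(d*t)) := by
  have := integral_Ioi_of_hasDerivAt_of_tendsto
    ((antideriv d a q hd.ne' t).continuousAt.continuousWithinAt)
    (fun x _ => antideriv d a q hd.ne' x)
    (integrableOn_atom d a q t hd ht)
    (tendsto0 d a q hd)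
  rw [this]; ring

lemma int_Ioc (d a q u : ℝ) (hd : 0 < d) (hu : 0 ≤ u) :
    ∫ x in Set.Ioc 0 u, (a + q*x) * Real.exp (-(d*x))
      = (a/d + q/d^2) - ((a + q*u)/d + q/d^2) * Real.exp (-(d*u)) := by
  rw [← intervalIntegral.integral_of_le hu]
  rw [intervalIntegral.integral_eq_sub_of_hasDerivAt
    (f := fun x => -((a + q*x)/d + q/d^2) * Real.exp (-(d*x)))
    (fun x _ => antideriv d a q hd.ne' x)
    (by apply Continuous.intervalIntegrable; continuity)]
  simp
  ring


lemma int_max (cc A C : ℝ) (hc : 0 < cc) (hCA : C ≤ A) (hC : 0 ≤ C) :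
    ∫ x in Set.Ioi (0:ℝ), max A (C + cc*x) * Real.exp (-x)
      = A + cc * Real.exp (-((A-C)/cc)) := by
  set t := (A-C)/cc with htdef
  have ht : 0 ≤ t := div_nonneg (by linarith) hc.le
  have key : C + cc*t = A := by rw [htdef]; field_simp; ring
  have hI1 : IntegrableOn (fun x => max A (C + cc*x) * Real.exp (-x)) (Set.Ioc 0 t) := by
    apply Continuous.integrableOn_Ioc
    exact (continuous_const.max (by continuity)).mul (by continuity)
  have hI2 : IntegrableOn (fun x => max A (C + cc*x) * Real.exp (-x)) (Set.Ioi t) := by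
    have := integrableOn_atom 1 C cc t one_pos ht
    apply this.congr_fun _ measurableSet_Ioi
    intro x hx
    have hx' : t < x := hx
    have : max A (C + cc*x) = C + cc*x := max_eq_right (by nlinarith)
    dsimp only; rw [this]; simp
  rw [← Set.Ioc_union_Ioi_eq_Ioi ht,
    setIntegral_union (Set.Ioc_disjoint_Ioi le_rfl) measurableSet_Ioi hI1 hI2]
  have e1 : ∫ x in Set.Ioc 0 t, max A (C + cc*x) * Real.exp (-x)
      = ∫ x in Set.Ioc 0 t, (A + 0*x) * Real.exp (-(1*x)) := by
    apply setIntegral_congr_fun measurableSet_Ioc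
    intro x hx
    have : max A (C + cc*x) = A := max_eq_left (by nlinarith [hx.2, key])
    dsimp only; rw [this]; simp
  have e2 : ∫ x in Set.Ioi t, max A (C + cc*x) * Real.exp (-x)
      = ∫ x in Set.Ioi t, (C + cc*x) * Real.exp (-(1*x)) := by
    apply setIntegral_congr_fun measurableSet_Ioi
    intro x hx
    have hx' : t < x := hx
    have : max A (C + cc*x) = C + cc*x := max_eq_right (by nlinarith)
    dsimp only; rw [this]; simp
  rw [e1, e2, int_Ioc 1 A 0 t one_pos ht, int_Ioi 1 C cc t one_pos ht]
  simp
  nlinarith [Real.exp_pos (-t), key]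

lemma stepA (b x1 x2 x4 x5 : ℝ) (hb0 : 0 < b) (hb1 : b < 1/4)
    (h1 : 0 < x1) (h4 : 0 < x4) (h2 : 0 ≤ x2) (h5 : 0 ≤ x5) :
    ∫ x3 in Set.Ioi (0:ℝ),
        max (b * x1 + b * x2 + b * x4 + b * x5)
            (b * x2 + (1 - 4 * b) * x3 + b * x5) *
          Real.exp (-(x1 + x2 + x3 + x4 + x5))
      = (b*(x1+x2+x4+x5) + (1-4*b) * Real.exp (-((b/(1-4*b))*(x1+x4))))
          * Real.exp (-(x1+x2+x4+x5)) := by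
  have hc : (0:ℝ) < 1-4*b := by linarith
  have e : ∀ x3 : ℝ, max (b * x1 + b * x2 + b * x4 + b * x5)
            (b * x2 + (1 - 4 * b) * x3 + b * x5) * Real.exp (-(x1 + x2 + x3 + x4 + x5))
      = (max (b * x1 + b * x2 + b * x4 + b * x5)
          ((b*x2 + b*x5) + (1-4*b)*x3) * Real.exp (-x3)) * Real.exp (-(x1+x2+x4+x5)) := by
    intro x3
    rw [show b * x2 + (1 - 4 * b) * x3 + b * x5 = (b*x2 + b*x5) + (1-4*b)*x3 by ring,
        show (-(x1 + x2 + x3 + x4 + x5)) = -x3 + -(x1+x2+x4+x5) by ring, Real.exp_add]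
    ring
  rw [setIntegral_congr_fun measurableSet_Ioi (fun x3 _ => e x3), integral_mul_const,
      int_max (1-4*b) _ _ hc (by nlinarith) (by nlinarith)]
  rw [show (b * x1 + b * x2 + b * x4 + b * x5 - (b*x2 + b*x5))/(1-4*b)
        = (b/(1-4*b))*(x1+x4) by field_simp; ring]
  ring

lemma stepB (β c k x1 x2 x5 : ℝ) (hk : 0 < k) (h5 : 0 ≤ x5) :
    ∫ x4 in Set.Ioc (0:ℝ) x5,
        (β*(x1+x2+x4+x5) + c * Real.exp (-(k*(x1+x4)))) * Real.exp (-(x1+x2+x4+x5))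
      = (β * Real.exp (-(x2+x5)) * ((x2+x5+1) - (x2+2*x5+1)*Real.exp (-x5))
          + (β * Real.exp (-(x2+x5)) * (1 - Real.exp (-x5))) * x1) * Real.exp (-(1*x1))
        + (c/(1+k) * Real.exp (-(x2+x5)) * (1 - Real.exp (-((1+k)*x5))))
            * Real.exp (-((1+k)*x1)) := by
  have h1k : (0:ℝ) < 1+k := by linarith
  have e : ∀ x4 : ℝ, (β*(x1+x2+x4+x5) + c * Real.exp (-(k*(x1+x4)))) * Real.exp (-(x1+x2+x4+x5))
      = (β*(x1+x2+x5)*Real.exp (-(x1+x2+x5)) + (β*Real.exp (-(x1+x2+x5)))*x4) * Real.exp (-(1*x4))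
        + (c*Real.exp (-(k*x1))*Real.exp (-(x1+x2+x5)) + 0*x4) * Real.exp (-((1+k)*x4)) := by
    intro x4
    rw [show (-(x1+x2+x4+x5)) = -(1*x4) + -(x1+x2+x5) by ring,
        show (-(k*(x1+x4))) = -(k*x1) + -(k*x4) by ring,
        show (-((1+k)*x4)) = -(k*x4) + -(1*x4) by ring]
    simp only [Real.exp_add]
    ring
  rw [setIntegral_congr_fun measurableSet_Ioc (fun x4 _ => e x4)]
  rw [integral_add ((by fun_prop : Continuous fun x4 : ℝ => (β*(x1+x2+x5)*Real.exp (-(x1+x2+x5)) + (β*Real.exp (-(x1+x2+x5)))*x4) * Real.exp (-(1*x4))).integrableOn_Ioc)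
      ((by fun_prop : Continuous fun x4 : ℝ => (c*Real.exp (-(k*x1))*Real.exp (-(x1+x2+x5)) + 0*x4) * Real.exp (-((1+k)*x4))).integrableOn_Ioc)]
  rw [int_Ioc 1 _ _ x5 one_pos h5, int_Ioc (1+k) _ _ x5 h1k h5]
  rw [show (-(x1+x2+x5)) = -x1 + -(x2+x5) by ring,
      show (-((1+k)*x1)) = -(k*x1) + -x1 by ring,
      show (-(1*x5)) = -x5 by ring, show (-(1*x1)) = -x1 by ring]
  simp only [Real.exp_add]
  field_simp
  ring

lemma stepC (β c k x2 x5 : ℝ) (hk : 0 < k) (h2 : 0 ≤ x2) :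
    ∫ x1 in Set.Ioc (0:ℝ) x2,
        ((β * Real.exp (-(x2+x5)) * ((x2+x5+1) - (x2+2*x5+1)*Real.exp (-x5))
          + (β * Real.exp (-(x2+x5)) * (1 - Real.exp (-x5))) * x1) * Real.exp (-(1*x1))
        + (c/(1+k) * Real.exp (-(x2+x5)) * (1 - Real.exp (-((1+k)*x5))))
            * Real.exp (-((1+k)*x1)))
      = (β*Real.exp (-x2)*(x2+2) - β*Real.exp (-x2)^2*(2*x2+2)
            + c/(1+k)^2 * (Real.exp (-x2) - Real.exp (-x2)*Real.exp (-((1+k)*x2)))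
          + (β*Real.exp (-x2) - β*Real.exp (-x2)^2)*x5) * Real.exp (-(1*x5))
        + (-(β*Real.exp (-x2)*(x2+2)) + β*Real.exp (-x2)^2*(2*x2+2)
          + (-(2*β*Real.exp (-x2)) + 2*β*Real.exp (-x2)^2)*x5) * Real.exp (-(2*x5))
        + (-(c/(1+k)^2 * (Real.exp (-x2) - Real.exp (-x2)*Real.exp (-((1+k)*x2)))))
            * Real.exp (-((2+k)*x5)) := by
  have h1k : (0:ℝ) < 1+k := by linarith
  have e : ∀ x1 : ℝ, ((β * Real.exp (-(x2+x5)) * ((x2+x5+1) - (x2+2*x5+1)*Real.exp (-x5))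
          + (β * Real.exp (-(x2+x5)) * (1 - Real.exp (-x5))) * x1) * Real.exp (-(1*x1))
        + (c/(1+k) * Real.exp (-(x2+x5)) * (1 - Real.exp (-((1+k)*x5))))
            * Real.exp (-((1+k)*x1)))
      = ((β * Real.exp (-(x2+x5)) * ((x2+x5+1) - (x2+2*x5+1)*Real.exp (-x5)))
          + (β * Real.exp (-(x2+x5)) * (1 - Real.exp (-x5))) * x1) * Real.exp (-(1*x1))
        + ((c/(1+k) * Real.exp (-(x2+x5)) * (1 - Real.exp (-((1+k)*x5)))) + 0*x1)
            * Real.exp (-((1+k)*x1)) := by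
    intro x1; ring
  rw [setIntegral_congr_fun measurableSet_Ioc (fun x1 _ => e x1)]
  rw [integral_add ((by fun_prop : Continuous fun x1 : ℝ =>
        ((β * Real.exp (-(x2+x5)) * ((x2+x5+1) - (x2+2*x5+1)*Real.exp (-x5)))
          + (β * Real.exp (-(x2+x5)) * (1 - Real.exp (-x5))) * x1) * Real.exp (-(1*x1))).integrableOn_Ioc)
      ((by fun_prop : Continuous fun x1 : ℝ =>
        ((c/(1+k) * Real.exp (-(x2+x5)) * (1 - Real.exp (-((1+k)*x5)))) + 0*x1)
            * Real.exp (-((1+k)*x1))).integrableOn_Ioc)]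
  rw [int_Ioc 1 _ _ x2 one_pos h2, int_Ioc (1+k) _ _ x2 h1k h2]
  rw [show (-(x2+x5)) = -x2 + -x5 by ring,
      show (-(1*x2)) = -x2 by ring, show (-(1*x5)) = -x5 by ring,
      show (-(2*x5)) = -x5 + -x5 by ring,
      show (-((2+k)*x5)) = -((1+k)*x5) + -x5 by ring]
  simp only [Real.exp_add]
  field_simp
  ring

lemma stepD (β c k x2 : ℝ) (hk : 0 < k) :
    ∫ x5 in Set.Ioi (0:ℝ),
        ((β*Real.exp (-x2)*(x2+2) - β*Real.exp (-x2)^2*(2*x2+2)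
            + c/(1+k)^2 * (Real.exp (-x2) - Real.exp (-x2)*Real.exp (-((1+k)*x2)))
          + (β*Real.exp (-x2) - β*Real.exp (-x2)^2)*x5) * Real.exp (-(1*x5))
        + (-(β*Real.exp (-x2)*(x2+2)) + β*Real.exp (-x2)^2*(2*x2+2)
          + (-(2*β*Real.exp (-x2)) + 2*β*Real.exp (-x2)^2)*x5) * Real.exp (-(2*x5))
        + (-(c/(1+k)^2 * (Real.exp (-x2) - Real.exp (-x2)*Real.exp (-((1+k)*x2)))))
            * Real.exp (-((2+k)*x5)))
      = ((3/2)*β + c/((1+k)*(2+k)) + (β/2)*x2) * Real.exp (-(1*x2))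
        + (-((3/2)*β) + (-β)*x2) * Real.exp (-(2*x2))
        + (-(c/((1+k)*(2+k)))) * Real.exp (-((2+k)*x2)) := by
  have h1k : (0:ℝ) < 1+k := by linarith
  have h2k : (0:ℝ) < 2+k := by linarith
  set A1 := β*Real.exp (-x2)*(x2+2) - β*Real.exp (-x2)^2*(2*x2+2)
      + c/(1+k)^2 * (Real.exp (-x2) - Real.exp (-x2)*Real.exp (-((1+k)*x2))) with hA1
  set Q1 := β*Real.exp (-x2) - β*Real.exp (-x2)^2 with hQ1
  set A2 := -(β*Real.exp (-x2)*(x2+2)) + β*Real.exp (-x2)^2*(2*x2+2) with hA2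
  set Q2 := -(2*β*Real.exp (-x2)) + 2*β*Real.exp (-x2)^2 with hQ2
  set A3 := -(c/(1+k)^2 * (Real.exp (-x2) - Real.exp (-x2)*Real.exp (-((1+k)*x2)))) with hA3
  have e : ∀ x5 : ℝ, ((A1 + Q1*x5) * Real.exp (-(1*x5))
        + (A2 + Q2*x5) * Real.exp (-(2*x5)) + A3 * Real.exp (-((2+k)*x5)))
      = ((A1 + Q1*x5) * Real.exp (-(1*x5)) + (A2 + Q2*x5) * Real.exp (-(2*x5)))
        + (A3 + 0*x5) * Real.exp (-((2+k)*x5)) := by intro x5; ring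
  rw [setIntegral_congr_fun measurableSet_Ioi (fun x5 _ => e x5)]
  have hf : IntegrableOn (fun x => (A1 + Q1*x) * Real.exp (-(1*x))
      + (A2 + Q2*x) * Real.exp (-(2*x))) (Set.Ioi (0:ℝ)) :=
    (integrableOn_atom 1 A1 Q1 0 one_pos le_rfl).add
      (integrableOn_atom 2 A2 Q2 0 two_pos le_rfl)
  rw [integral_add hf (integrableOn_atom (2+k) A3 0 0 h2k le_rfl)]
  rw [integral_add (integrableOn_atom 1 A1 Q1 0 one_pos le_rfl)
      (integrableOn_atom 2 A2 Q2 0 two_pos le_rfl)]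
  rw [int_Ioi 1 A1 Q1 0 one_pos le_rfl, int_Ioi 2 A2 Q2 0 two_pos le_rfl,
      int_Ioi (2+k) A3 0 0 h2k le_rfl]
  rw [show (-(1*x2)) = -x2 by ring, show (-(2*x2)) = -x2 + -x2 by ring,
      show (-((2+k)*x2)) = -((1+k)*x2) + -x2 by ring]
  simp only [mul_zero, neg_zero, Real.exp_zero, Real.exp_add, hA1, hQ1, hA2, hQ2, hA3]
  field_simp
  ring

lemma stepE (β c k : ℝ) (hk : 0 < k) :
    ∫ x2 in Set.Ioi (0:ℝ),
        (((3/2)*β + c/((1+k)*(2+k)) + (β/2)*x2) * Real.exp (-(1*x2))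
        + (-((3/2)*β) + (-β)*x2) * Real.exp (-(2*x2))
        + (-(c/((1+k)*(2+k)))) * Real.exp (-((2+k)*x2)))
      = β + c/(2+k)^2 := by
  have h1k : (0:ℝ) < 1+k := by linarith
  have h2k : (0:ℝ) < 2+k := by linarith
  set A1 := (3/2)*β + c/((1+k)*(2+k)) with hA1
  set A3 := -(c/((1+k)*(2+k))) with hA3
  have e : ∀ x2 : ℝ, ((A1 + (β/2)*x2) * Real.exp (-(1*x2))
        + (-((3/2)*β) + (-β)*x2) * Real.exp (-(2*x2)) + A3 * Real.exp (-((2+k)*x2)))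
      = ((A1 + (β/2)*x2) * Real.exp (-(1*x2))
        + (-((3/2)*β) + (-β)*x2) * Real.exp (-(2*x2)))
        + (A3 + 0*x2) * Real.exp (-((2+k)*x2)) := by intro x2; ring
  rw [setIntegral_congr_fun measurableSet_Ioi (fun x2 _ => e x2)]
  have hf : IntegrableOn (fun x => (A1 + (β/2)*x) * Real.exp (-(1*x))
      + (-((3/2)*β) + (-β)*x) * Real.exp (-(2*x))) (Set.Ioi (0:ℝ)) :=
    (integrableOn_atom 1 A1 (β/2) 0 one_pos le_rfl).add
      (integrableOn_atom 2 (-((3/2)*β)) (-β) 0 two_pos le_rfl)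
  rw [integral_add hf (integrableOn_atom (2+k) A3 0 0 h2k le_rfl)]
  rw [integral_add (integrableOn_atom 1 A1 (β/2) 0 one_pos le_rfl)
      (integrableOn_atom 2 (-((3/2)*β)) (-β) 0 two_pos le_rfl)]
  rw [int_Ioi 1 A1 (β/2) 0 one_pos le_rfl, int_Ioi 2 (-((3/2)*β)) (-β) 0 two_pos le_rfl,
      int_Ioi (2+k) A3 0 0 h2k le_rfl]
  simp only [mul_zero, neg_zero, Real.exp_zero, hA1, hA3]
  field_simp
  ring

theorem stmt_9 (b : ℝ) (hb0 : 0 < b) (hb1 : b < 1 / 4) :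
    4 * ∫ x2 in Set.Ioi (0 : ℝ), ∫ x5 in Set.Ioi (0 : ℝ),
        ∫ x1 in Set.Ioc (0 : ℝ) x2, ∫ x4 in Set.Ioc (0 : ℝ) x5,
        ∫ x3 in Set.Ioi (0 : ℝ),
          max (b * x1 + b * x2 + b * x4 + b * x5)
              (b * x2 + (1 - 4 * b) * x3 + b * x5) *
            Real.exp (-(x1 + x2 + x3 + x4 + x5)) =
      4 * (1 - 3 * b) * (5 * b ^ 2 - 5 * b + 1) / (7 * b - 2) ^ 2 := by
  have hc : (0:ℝ) < 1 - 4*b := by linarith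
  have hk : 0 < b/(1-4*b) := div_pos hb0 hc
  have h2 : ∀ x2 ∈ Set.Ioi (0:ℝ),
      (∫ x5 in Set.Ioi (0 : ℝ),
        ∫ x1 in Set.Ioc (0 : ℝ) x2, ∫ x4 in Set.Ioc (0 : ℝ) x5,
        ∫ x3 in Set.Ioi (0 : ℝ),
          max (b * x1 + b * x2 + b * x4 + b * x5)
              (b * x2 + (1 - 4 * b) * x3 + b * x5) *
            Real.exp (-(x1 + x2 + x3 + x4 + x5)))
      = (((3/2)*b + (1-4*b)/((1+b/(1-4*b))*(2+b/(1-4*b))) + (b/2)*x2) * Real.exp (-(1*x2))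
        + (-((3/2)*b) + (-b)*x2) * Real.exp (-(2*x2))
        + (-((1-4*b)/((1+b/(1-4*b))*(2+b/(1-4*b))))) * Real.exp (-((2+b/(1-4*b))*x2))) := by
    intro x2 hx2
    have h5 : ∀ x5 ∈ Set.Ioi (0:ℝ),
        (∫ x1 in Set.Ioc (0 : ℝ) x2, ∫ x4 in Set.Ioc (0 : ℝ) x5,
          ∫ x3 in Set.Ioi (0 : ℝ),
            max (b * x1 + b * x2 + b * x4 + b * x5)
                (b * x2 + (1 - 4 * b) * x3 + b * x5) *
              Real.exp (-(x1 + x2 + x3 + x4 + x5)))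
        = ((b*Real.exp (-x2)*(x2+2) - b*Real.exp (-x2)^2*(2*x2+2)
            + (1-4*b)/(1+b/(1-4*b))^2 * (Real.exp (-x2) - Real.exp (-x2)*Real.exp (-((1+b/(1-4*b))*x2)))
          + (b*Real.exp (-x2) - b*Real.exp (-x2)^2)*x5) * Real.exp (-(1*x5))
        + (-(b*Real.exp (-x2)*(x2+2)) + b*Real.exp (-x2)^2*(2*x2+2)
          + (-(2*b*Real.exp (-x2)) + 2*b*Real.exp (-x2)^2)*x5) * Real.exp (-(2*x5))
        + (-((1-4*b)/(1+b/(1-4*b))^2 * (Real.exp (-x2) - Real.exp (-x2)*Real.exp (-((1+b/(1-4*b))*x2)))))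
            * Real.exp (-((2+b/(1-4*b))*x5))) := by
      intro x5 hx5
      have h1 : ∀ x1 ∈ Set.Ioc (0:ℝ) x2,
          (∫ x4 in Set.Ioc (0 : ℝ) x5,
            ∫ x3 in Set.Ioi (0 : ℝ),
              max (b * x1 + b * x2 + b * x4 + b * x5)
                  (b * x2 + (1 - 4 * b) * x3 + b * x5) *
                Real.exp (-(x1 + x2 + x3 + x4 + x5)))
          = ((b * Real.exp (-(x2+x5)) * ((x2+x5+1) - (x2+2*x5+1)*Real.exp (-x5))
              + (b * Real.exp (-(x2+x5)) * (1 - Real.exp (-x5))) * x1) * Real.exp (-(1*x1))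
            + ((1-4*b)/(1+b/(1-4*b)) * Real.exp (-(x2+x5)) * (1 - Real.exp (-((1+b/(1-4*b))*x5))))
                * Real.exp (-((1+b/(1-4*b))*x1))) := by
        intro x1 hx1
        have h4 : ∀ x4 ∈ Set.Ioc (0:ℝ) x5,
            (∫ x3 in Set.Ioi (0 : ℝ),
              max (b * x1 + b * x2 + b * x4 + b * x5)
                  (b * x2 + (1 - 4 * b) * x3 + b * x5) *
                Real.exp (-(x1 + x2 + x3 + x4 + x5)))
            = (b*(x1+x2+x4+x5) + (1-4*b) * Real.exp (-((b/(1-4*b))*(x1+x4))))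
                * Real.exp (-(x1+x2+x4+x5)) := fun x4 hx4 =>
          stepA b x1 x2 x4 x5 hb0 hb1 hx1.1 hx4.1 (le_of_lt hx2) (le_of_lt hx5)
        rw [setIntegral_congr_fun measurableSet_Ioc (fun x4 hx4 => h4 x4 hx4)]
        exact stepB b (1-4*b) (b/(1-4*b)) x1 x2 x5 hk (le_of_lt hx5)
      rw [setIntegral_congr_fun measurableSet_Ioc (fun x1 hx1 => h1 x1 hx1)]
      exact stepC b (1-4*b) (b/(1-4*b)) x2 x5 hk (le_of_lt hx2)
    rw [setIntegral_congr_fun measurableSet_Ioi (fun x5 hx5 => h5 x5 hx5)]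
    exact stepD b (1-4*b) (b/(1-4*b)) x2 hk
  rw [setIntegral_congr_fun measurableSet_Ioi (fun x2 hx2 => h2 x2 hx2)]
  rw [stepE b (1-4*b) (b/(1-4*b)) hk]
  have h7 : (7*b-2) ≠ 0 := by intro h; nlinarith
  have h2k : (2 + b/(1-4*b)) ≠ 0 := by positivity
  have h8 : (2 - 7*b) ≠ 0 := by intro h; nlinarith
  have h9 : (4 - b*28 + b^2*49) ≠ 0 := by
    have := pow_ne_zero 2 h7; ring_nf at this ⊢; exact this
  have h10 : b * 7 - 2 ≠ 0 := by intro h; nlinarith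
  field_simp
  ring
end

section
/- The polynomial 1452b⁵ - 3993b⁴ + 2765b³ - 804b² + 105b - 5 has a unique zero b in the open interval (0, 1/5). -/
theorem stmt_11 :
    ∃! b : ℝ, b ∈ Set.Ioo (0 : ℝ) (1 / 5) ∧
      1452 * b ^ 5 - 3993 * b ^ 4 + 2765 * b ^ 3 - 804 * b ^ 2 + 105 * b - 5 = 0 := by
  set f : ℝ → ℝ := fun b => 1452 * b ^ 5 - 3993 * b ^ 4 + 2765 * b ^ 3 - 804 * b ^ 2 + 105 * b - 5 with hf
  have hcont : Continuous f := by fun_prop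
  have hderiv : ∀ x : ℝ, HasDerivAt f (7260 * x ^ 4 - 15972 * x ^ 3 + 8295 * x ^ 2 - 1608 * x + 105) x := by
    intro x
    have h : HasDerivAt f (1452 * (5 * x ^ 4) - 3993 * (4 * x ^ 3) + 2765 * (3 * x ^ 2) - 804 * (2 * x ^ 1) + 105 * 1 - 0) x := by
      exact ((((((hasDerivAt_pow 5 x).const_mul (1452:ℝ)).sub
        ((hasDerivAt_pow 4 x).const_mul (3993:ℝ))).add
        ((hasDerivAt_pow 3 x).const_mul (2765:ℝ))).sub
        ((hasDerivAt_pow 2 x).const_mul (804:ℝ))).add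
        ((hasDerivAt_id x).const_mul (105:ℝ))).sub (hasDerivAt_const x 5)
    convert h using 1; ring
  -- strict mono on [0.11, 0.12]
  have hmono : StrictMonoOn f (Set.Icc (0.11 : ℝ) 0.12) := by
    apply strictMonoOn_of_deriv_pos (convex_Icc _ _) hcont.continuousOn
    intro x hx
    rw [interior_Icc] at hx
    rw [(hderiv x).deriv]
    nlinarith [hx.1, hx.2, sq_nonneg x, sq_nonneg (x - 0.11), sq_nonneg (x - 0.12), mul_pos (sub_pos.2 hx.1) (sub_pos.2 hx.2)]
  -- any root in (0,1/5) lies in [0.11, 0.12]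
  have hloc : ∀ b : ℝ, b ∈ Set.Ioo (0:ℝ) (1/5) → f b = 0 → b ∈ Set.Icc (0.11:ℝ) 0.12 := by
    intro b hb hfb
    constructor
    · by_contra h
      push_neg at h
      have hb0 := hb.1
      have : f b < 0 := by
        simp only [hf]
        nlinarith [sq_nonneg b, sq_nonneg (b - 0.11), mul_pos hb0 hb0, sq_nonneg (b^2 - 0.01), mul_pos (mul_pos hb0 hb0) hb0]
      linarith [this, hfb.ge]
    · by_contra h
      push_neg at h
      have hb1 := hb.2
      have : 0 < f b := by
        simp only [hf]
        have hp : (0:ℝ) < b - 0.12 := by linarith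
        have hq : (0:ℝ) < 0.2 - b := by linarith
        nlinarith [mul_pos hp hq, mul_pos (mul_pos hp hp) hq, mul_pos hp (mul_pos hq hq),
          mul_pos (mul_pos hp hp) (mul_pos hq hq), mul_pos (mul_pos hp hp) hp, sq_nonneg (b - 0.15),
          mul_pos hp hp, mul_pos hq hq, mul_pos (mul_pos hp (mul_pos hq hq)) hq]
      linarith [this, hfb.le]
  -- existence via IVT on [0.11, 0.12]
  have h1 : f 0.11 < 0 := by norm_num [hf]
  have h2 : 0 < f 0.12 := by norm_num [hf]
  have hIVT : ∃ c ∈ Set.Ioo (0.11:ℝ) 0.12, f c = 0 := by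
    have := intermediate_value_Ioo (by norm_num : (0.11:ℝ) ≤ 0.12) hcont.continuousOn
    have hmem : (0:ℝ) ∈ Set.Ioo (f 0.11) (f 0.12) := ⟨h1, h2⟩
    obtain ⟨c, hc, hfc⟩ := this hmem
    exact ⟨c, hc, hfc⟩
  obtain ⟨c, hc, hfc⟩ := hIVT
  refine ⟨c, ⟨⟨by linarith [hc.1], by linarith [hc.2]⟩, hfc⟩, ?_⟩
  intro y ⟨hy, hfy⟩
  have hyI := hloc y hy hfy
  have hcI : c ∈ Set.Icc (0.11:ℝ) 0.12 := ⟨hc.1.le, hc.2.le⟩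
  exact hmono.injOn hyI hcI (hfy.trans hfc.symm)
end

section
/- The polynomial 2372895b⁶ - 3013200b⁵ + 1501416b⁴ - 389232b³ + 56016b² - 4224b + 128 has a unique zero b in (0, 1/6), and for this b, E = -2(-128 + 2448b - 17856b² + 60372b³ - 88938b⁴ + 37665b⁵) / (9(32 - 600b + 4212b² - 13122b³ + 15309b⁴)) satisfies 0.8696 < E < 0.8697. -/
noncomputable def fP : ℝ → ℝ := fun b =>
  2372895 * b ^ 6 - 3013200 * b ^ 5 + 1501416 * b ^ 4 - 389232 * b ^ 3 +
    56016 * b ^ 2 - 4224 * b + 128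

lemma fP_hasDerivAt (x : ℝ) : HasDerivAt fP
    (14237370*x^5 - 15066000*x^4 + 6005664*x^3 - 1167696*x^2 + 112032*x - 4224) x := by
  have h : HasDerivAt (fun b : ℝ =>
      2372895 * b ^ 6 - 3013200 * b ^ 5 + 1501416 * b ^ 4 - 389232 * b ^ 3 +
      56016 * b ^ 2 - 4224 * b + 128)
      (2372895 * (6 * x ^ 5) - 3013200 * (5 * x ^ 4) + 1501416 * (4 * x ^ 3)
        - 389232 * (3 * x ^ 2) + 56016 * (2 * x ^ 1) - 4224 * 1 + 0) x := by
    simpa using ((((((((hasDerivAt_pow 6 x).const_mul 2372895).sub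
      ((hasDerivAt_pow 5 x).const_mul 3013200)).add
      ((hasDerivAt_pow 4 x).const_mul 1501416)).sub
      ((hasDerivAt_pow 3 x).const_mul 389232)).add
      ((hasDerivAt_pow 2 x).const_mul 56016)).sub
      ((hasDerivAt_id x).const_mul 4224)).add_const 128)
  unfold fP
  convert h using 1
  ring

lemma fP_anti : StrictAntiOn fP (Set.Icc (0:ℝ) (11/100)) := by
  apply strictAntiOn_of_deriv_neg (convex_Icc _ _)
    (fun x _ => (fP_hasDerivAt x).continuousAt.continuousWithinAt)
  intro x hx
  rw [interior_Icc] at hx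
  rw [(fP_hasDerivAt x).deriv]
  obtain ⟨hx0, hx1⟩ := hx
  nlinarith [mul_pos hx0 hx0, mul_pos (mul_pos hx0 hx0) hx0, sq_nonneg x,
    sq_nonneg (x - 11/100), mul_pos (mul_pos (mul_pos hx0 hx0) hx0) hx0,
    mul_nonneg (mul_nonneg hx0.le hx0.le) (sq_nonneg (x - 11/100))]

lemma fP_neg {b : ℝ} (h1 : 11/100 ≤ b) (h2 : b ≤ 1/6) : fP b < 0 := by
  unfold fP
  nlinarith [sq_nonneg (b - 11/100), sq_nonneg (b - 1/6),
    mul_nonneg (sub_nonneg.2 h1) (sub_nonneg.2 h2), sq_nonneg b,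
    mul_nonneg (mul_nonneg (sub_nonneg.2 h1) (sub_nonneg.2 h2)) (sq_nonneg b),
    mul_nonneg (mul_nonneg (sub_nonneg.2 h1) (sub_nonneg.2 h1)) (sub_nonneg.2 h2)]

lemma fP_le {b : ℝ} (hb : b ∈ Set.Ioo (0:ℝ) (1/6)) (hf : fP b = 0) : b ≤ 11/100 := by
  by_contra h
  exact absurd hf (ne_of_lt (fP_neg (le_of_not_ge h) hb.2.le))

lemma fP_bounds {b : ℝ} (hb : b ∈ Set.Ioo (0:ℝ) (1/6)) (hf : fP b = 0) :
    884/10000 < b ∧ b < 886/10000 := by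
  obtain ⟨hb0, hb1⟩ := hb
  have hbm : b ∈ Set.Icc (0:ℝ) (11/100) := ⟨hb0.le, fP_le ⟨hb0, hb1⟩ hf⟩
  have hl : (884/10000 : ℝ) ∈ Set.Icc (0:ℝ) (11/100) := by norm_num
  have hu : (886/10000 : ℝ) ∈ Set.Icc (0:ℝ) (11/100) := by norm_num
  have hfl : 0 < fP (884/10000) := by unfold fP; norm_num
  have hfu : fP (886/10000) < 0 := by unfold fP; norm_num
  constructor
  · by_contra h
    push_neg at h
    rcases h.lt_or_eq with h' | h'
    · have := fP_anti hbm hl h'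
      rw [hf] at this
      linarith
    · rw [h'] at hf; linarith
  · by_contra h
    push_neg at h
    rcases h.lt_or_eq with h' | h'
    · have := fP_anti hu hbm h'
      rw [hf] at this
      linarith
    · rw [← h'] at hf; linarith

theorem stmt_14 :
    (∃! b : ℝ, b ∈ Set.Ioo (0 : ℝ) (1 / 6) ∧
      2372895 * b ^ 6 - 3013200 * b ^ 5 + 1501416 * b ^ 4 - 389232 * b ^ 3 +
        56016 * b ^ 2 - 4224 * b + 128 = 0) ∧
    ∀ b : ℝ, b ∈ Set.Ioo (0 : ℝ) (1 / 6) →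
      2372895 * b ^ 6 - 3013200 * b ^ 5 + 1501416 * b ^ 4 - 389232 * b ^ 3 +
        56016 * b ^ 2 - 4224 * b + 128 = 0 →
      0.8696 < -2 * (-128 + 2448 * b - 17856 * b ^ 2 + 60372 * b ^ 3 -
            88938 * b ^ 4 + 37665 * b ^ 5) /
          (9 * (32 - 600 * b + 4212 * b ^ 2 - 13122 * b ^ 3 + 15309 * b ^ 4)) ∧
        -2 * (-128 + 2448 * b - 17856 * b ^ 2 + 60372 * b ^ 3 -
            88938 * b ^ 4 + 37665 * b ^ 5) /
          (9 * (32 - 600 * b + 4212 * b ^ 2 - 13122 * b ^ 3 + 15309 * b ^ 4)) < 0.8697 := by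
  constructor
  · -- existence and uniqueness
    have hcont : ContinuousOn fP (Set.Icc (884/10000:ℝ) (886/10000)) := by
      unfold fP; fun_prop
    have hIVT := intermediate_value_Ioo' (a := (884/10000:ℝ)) (b := 886/10000)
      (by norm_num) hcont
    have h0 : (0:ℝ) ∈ Set.Ioo (fP (886/10000)) (fP (884/10000)) := by
      constructor <;> (unfold fP; norm_num)
    obtain ⟨b₀, hmem, hroot⟩ := hIVT h0
    have hb₀ : b₀ ∈ Set.Ioo (0:ℝ) (1/6) := ⟨by linarith [hmem.1], by linarith [hmem.2]⟩
    refine ⟨b₀, ⟨hb₀, hroot⟩, ?_⟩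
    intro y ⟨hy, hyroot⟩
    have hym : y ∈ Set.Icc (0:ℝ) (11/100) := ⟨hy.1.le, fP_le hy hyroot⟩
    have hbm : b₀ ∈ Set.Icc (0:ℝ) (11/100) := ⟨hb₀.1.le, fP_le hb₀ hroot⟩
    exact fP_anti.injOn hym hbm (by rw [show fP y = _ from hyroot, show fP b₀ = _ from hroot])
  · intro b hb heq
    obtain ⟨h1, h2⟩ := fP_bounds hb heq
    have hD : (0:ℝ) < 9 * (32 - 600 * b + 4212 * b ^ 2 - 13122 * b ^ 3 + 15309 * b ^ 4) := by
      nlinarith [sq_nonneg b, sq_nonneg (b - 884/10000), mul_pos (sub_pos.2 h1) (sub_pos.2 h2)]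
    constructor
    · rw [lt_div_iff₀ hD]
      norm_num
      nlinarith [mul_pos (sub_pos.2 h1) (sub_pos.2 h2), sq_nonneg (b - 884/10000),
        sq_nonneg (b - 886/10000), mul_nonneg (mul_pos (sub_pos.2 h1) (sub_pos.2 h2)).le (sq_nonneg b)]
    · rw [div_lt_iff₀ hD]
      norm_num
      nlinarith [mul_pos (sub_pos.2 h1) (sub_pos.2 h2), sq_nonneg (b - 884/10000),
        sq_nonneg (b - 886/10000), mul_nonneg (mul_pos (sub_pos.2 h1) (sub_pos.2 h2)).le (sq_nonneg b)]
end

section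
/- Let G be a graph on n̄ vertices with M̄ edges satisfying M̄ ≤ n̄/2 - s for some s > 0 and n̄ ≥ 4. If G is chosen uniformly at random among all graphs with n̄ vertices and M̄ edges, then the expected number of vertices lying on cycles is at most (1/2)·(n̄-3)/s. -/
open scoped Classical

open Finset Function SimpleGraph

namespace Stmt17

variable {V : Type*} {G : SimpleGraph V}

/-! ### Walk index lemmas -/

lemma getVert_eq_get {u v : V} (p : G.Walk u v) (i : ℕ) (h : i < p.support.length) :
    p.getVert i = p.support.get ⟨i, h⟩ := by
  induction p generalizing i with
  | nil =>
    simp only [SimpleGraph.Walk.support_nil, List.length_singleton] at h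
    interval_cases i
    rfl
  | cons hadj q ih =>
    cases i with
    | zero => rfl
    | succ j =>
      simp only [SimpleGraph.Walk.support_cons, List.length_cons] at h
      rw [SimpleGraph.Walk.getVert_cons_succ, ih j (by omega)]
      rfl

lemma cyc_getVert_inj {v : V} {c : G.Walk v v} (hc : c.IsCycle) {i j : ℕ}
    (hi0 : 1 ≤ i) (hi : i ≤ c.length) (hj0 : 1 ≤ j) (hj : j ≤ c.length)
    (hij : c.getVert i = c.getVert j) : i = j := by
  have hsl : c.support.length = c.length + 1 := SimpleGraph.Walk.length_support _
  have htl : c.support.tail.length = c.length := by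
    rw [List.length_tail, hsl]
    omega
  obtain ⟨i', rfl⟩ : ∃ i', i = i' + 1 := ⟨i - 1, by omega⟩
  obtain ⟨j', rfl⟩ : ∃ j', j = j' + 1 := ⟨j - 1, by omega⟩
  have h1 : i' < c.support.tail.length := by omega
  have h2 : j' < c.support.tail.length := by omega
  have e1 : c.support.tail.get ⟨i', h1⟩ = c.support.get ⟨i' + 1, by omega⟩ :=
    List.get_tail _ _ _
  have e2 : c.support.tail.get ⟨j', h2⟩ = c.support.get ⟨j' + 1, by omega⟩ :=
    List.get_tail _ _ _
  have hgg : c.support.tail.get ⟨i', h1⟩ = c.support.tail.get ⟨j', h2⟩ := by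
    rw [e1, e2, ← getVert_eq_get, ← getVert_eq_get]
    exact hij
  have := (hc.support_nodup.get_inj_iff).mp hgg
  have : i' = j' := congrArg Fin.val this
  omega

lemma cyc_getVert_inj0 {v : V} {c : G.Walk v v} (hc : c.IsCycle) {i j : ℕ}
    (hi : i < c.length) (hj : j < c.length)
    (hij : c.getVert i = c.getVert j) : i = j := by
  rcases Nat.eq_zero_or_pos i with hi0 | hi0 <;> rcases Nat.eq_zero_or_pos j with hj0 | hj0
  · omega
  · exfalso
    subst hi0
    have hvj : c.getVert c.length = c.getVert j :=
      (SimpleGraph.Walk.getVert_length c).trans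
        ((SimpleGraph.Walk.getVert_zero c).symm.trans hij)
    have := cyc_getVert_inj hc (by omega) (le_refl _) hj0 (le_of_lt hj) hvj
    omega
  · exfalso
    subst hj0
    have hvi : c.getVert c.length = c.getVert i :=
      (SimpleGraph.Walk.getVert_length c).trans
        ((SimpleGraph.Walk.getVert_zero c).symm.trans hij.symm)
    have := cyc_getVert_inj hc (by omega) (le_refl _) hi0 (le_of_lt hi) hvi
    omega
  · exact cyc_getVert_inj hc hi0 (le_of_lt hi) hj0 (le_of_lt hj) hij

/-! ### Cyclic successor on `Fin k` -/

def cycNext {k : ℕ} (i : Fin k) : Fin k :=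
  ⟨(i.1 + 1) % k, Nat.mod_lt _ (Nat.lt_of_le_of_lt (Nat.zero_le _) i.2)⟩

lemma cycNext_ne {k : ℕ} (hk : 3 ≤ k) (i : Fin k) : cycNext i ≠ i := by
  intro h
  have hval : (i.1 + 1) % k = i.1 := congrArg Fin.val h
  rcases lt_or_ge (i.1 + 1) k with h1 | h1
  · rw [Nat.mod_eq_of_lt h1] at hval; omega
  · have hik : i.1 < k := i.2
    have : i.1 + 1 = k := by omega
    rw [this, Nat.mod_self] at hval
    omega

lemma cycNext_cycNext_ne {k : ℕ} (hk : 3 ≤ k) (j : Fin k) : cycNext (cycNext j) ≠ j := by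
  intro h
  have hval : ((j.1 + 1) % k + 1) % k = j.1 := congrArg Fin.val h
  have h2 : ((j.1 + 1) % k + 1) % k = (j.1 + 2) % k := by
    conv_lhs => rw [Nat.mod_add_mod]
  rw [h2] at hval
  have hjk : j.1 < k := j.2
  rcases lt_or_ge (j.1 + 2) k with h1 | h1
  · rw [Nat.mod_eq_of_lt h1] at hval; omega
  · have hx : (j.1 + 2) % k = j.1 + 2 - k := by
      rw [Nat.mod_eq_sub_mod h1, Nat.mod_eq_of_lt (by omega)]
    rw [hx] at hval
    omega

end Stmt17

namespace Stmt17

/-! ### Counting structures -/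

variable (n M : ℕ)

noncomputable abbrev Uu : Finset (Sym2 (Fin n)) := (⊤ : SimpleGraph (Fin n)).edgeFinset

noncomputable def cycEdges {k : ℕ} (f : Fin k → Fin n) : Finset (Sym2 (Fin n)) :=
  Finset.univ.image fun i : Fin k => s(f i, f (cycNext i))

lemma cycEdges_map_injective {k : ℕ} (hk : 3 ≤ k) {f : Fin k → Fin n}
    (hf : Function.Injective f) :
    Function.Injective (fun i : Fin k => s(f i, f (cycNext i))) := by
  intro i j hij
  simp only [Sym2.eq_iff] at hij
  rcases hij with ⟨h1, _⟩ | ⟨h1, h2⟩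
  · exact hf h1
  · have hi : i = cycNext j := hf h1
    have hj : cycNext i = j := hf h2
    exfalso
    apply cycNext_cycNext_ne hk j
    rw [← hi, hj]

lemma card_cycEdges {k : ℕ} (hk : 3 ≤ k) {f : Fin k → Fin n}
    (hf : Function.Injective f) : (cycEdges n f).card = k := by
  rw [cycEdges, Finset.card_image_of_injective _ (cycEdges_map_injective n hk hf)]
  simp

lemma cycEdges_subset_top {k : ℕ} (hk : 3 ≤ k) {f : Fin k → Fin n}
    (hf : Function.Injective f) : cycEdges n f ⊆ Uu n := by
  intro e he
  rw [cycEdges, Finset.mem_image] at he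
  obtain ⟨i, _, rfl⟩ := he
  rw [SimpleGraph.mem_edgeFinset, SimpleGraph.edgeSet_top]
  simp only [Set.mem_compl_iff, Sym2.mem_diagSet, Sym2.isDiag_iff_proj_eq]
  intro hdiag
  exact cycNext_ne hk i (hf hdiag.symm)

noncomputable def Tk (k : ℕ) : Finset ((Fin k → Fin n) × Finset (Sym2 (Fin n))) :=
  ((Finset.univ.filter fun f : Fin k → Fin n => Function.Injective f) ×ˢ
      (Finset.powersetCard M (Uu n))).filter fun p => cycEdges n p.1 ⊆ p.2

lemma card_product_filter {α β : Type*} (s : Finset α) (t : Finset β) (Q : α × β → Prop)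
    [DecidablePred Q] [∀ a, DecidablePred fun b => Q (a, b)] :
    ((s ×ˢ t).filter Q).card = ∑ a ∈ s, (t.filter fun b => Q (a, b)).card := by
  rw [Finset.card_filter, Finset.sum_product]
  refine Finset.sum_congr rfl fun a _ => ?_
  rw [Finset.card_filter]

lemma card_supersets {α : Type*} [DecidableEq α] (W E : Finset α) (hE : E ⊆ W) :
    ((Finset.powersetCard M W).filter fun A => E ⊆ A).card ≤
      (W.card - E.card).choose (M - E.card) := by
  have h := Finset.card_le_card_of_injOn (fun A => A \ E)
    (s := (Finset.powersetCard M W).filter fun A => E ⊆ A)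
    (t := Finset.powersetCard (M - E.card) (W \ E)) ?_ ?_
  · refine h.trans ?_
    rw [Finset.card_powersetCard, Finset.card_sdiff_of_subset hE]
  · intro A hA
    rw [Finset.mem_coe, Finset.mem_filter, Finset.mem_powersetCard] at hA
    obtain ⟨⟨hAW, hAcard⟩, hEA⟩ := hA
    rw [Finset.mem_coe, Finset.mem_powersetCard]
    constructor
    · exact Finset.sdiff_subset_sdiff hAW (le_refl _)
    · rw [Finset.card_sdiff_of_subset hEA, hAcard]
  · intro A hA B hB hAB
    simp only [Finset.coe_filter, Set.mem_setOf_eq, Finset.mem_powersetCard] at hA hB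
    have hAB' : A \ E = B \ E := hAB
    have : A \ E ∪ E = B \ E ∪ E := by rw [hAB']
    rwa [Finset.sdiff_union_of_subset hA.2, Finset.sdiff_union_of_subset hB.2] at this

lemma card_Wk (k : ℕ) :
    (Finset.univ.filter fun f : Fin k → Fin n => Function.Injective f).card =
      n.descFactorial k := by
  rw [← Fintype.card_subtype]
  rw [Fintype.card_congr (Equiv.subtypeInjectiveEquivEmbedding (Fin k) (Fin n))]
  rw [Fintype.card_embedding_eq]
  simp

lemma card_Tk (k : ℕ) (hk : 3 ≤ k) :
    (Tk n M k).card ≤ n.descFactorial k * ((Uu n).card - k).choose (M - k) := by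
  rw [Tk, card_product_filter _ _ (fun p => cycEdges n p.1 ⊆ p.2)]
  have hstep : ∀ f ∈ Finset.univ.filter fun f : Fin k → Fin n => Function.Injective f,
      ((Finset.powersetCard M (Uu n)).filter fun A => cycEdges n f ⊆ A).card ≤
        ((Uu n).card - k).choose (M - k) := by
    intro f hf
    rw [Finset.mem_filter] at hf
    have h1 := card_supersets M (Uu n) (cycEdges n f) (cycEdges_subset_top n hk hf.2)
    rwa [card_cycEdges n hk hf.2] at h1
  refine le_trans (Finset.sum_le_sum hstep) ?_
  rw [Finset.sum_const, card_Wk, smul_eq_mul]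

/-! ### The injection -/

noncomputable def phi (p : (SimpleGraph (Fin n) × Fin n) × Bool) :
    Σ k : ℕ, (Fin k → Fin n) × Finset (Sym2 (Fin n)) :=
  if h : ∃ c : p.1.1.Walk p.1.2 p.1.2, c.IsCycle then
    ⟨h.choose.length,
      ((fun i => if p.2 then h.choose.getVert i.1
        else h.choose.getVert (h.choose.length - i.1)),
        p.1.1.edgeFinset)⟩
  else ⟨0, (fun i => i.elim0, ∅)⟩

noncomputable def Omg : Finset (SimpleGraph (Fin n)) :=
  Finset.univ.filter fun G : SimpleGraph (Fin n) => G.edgeSet.ncard = M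

noncomputable def D0 : Finset (SimpleGraph (Fin n) × Fin n) :=
  ((Omg n M) ×ˢ Finset.univ).filter fun p => ∃ c : p.1.Walk p.2 p.2, c.IsCycle

lemma edgeFinset_card_of_ncard {G : SimpleGraph (Fin n)} (hG : G.edgeSet.ncard = M) :
    G.edgeFinset.card = M := by
  rw [← hG, Set.ncard_eq_toFinset_card']
  exact congrArg Finset.card (Finset.ext fun e => by simp)

lemma phi_mapsTo : ∀ p ∈ (D0 n M) ×ˢ (Finset.univ : Finset Bool),
    phi n p ∈ (Finset.Icc 3 M).sigma (fun k => Tk n M k) := by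
  rintro ⟨⟨G, v⟩, b⟩ hp
  rw [Finset.mem_product] at hp
  have hp1 := hp.1
  rw [D0, Finset.mem_filter, Finset.mem_product] at hp1
  obtain ⟨⟨hG, -⟩, hcyc⟩ := hp1
  rw [Omg, Finset.mem_filter] at hG
  have hGM : G.edgeSet.ncard = M := hG.2
  have hcyc' : ∃ c : G.Walk v v, c.IsCycle := hcyc
  simp only [phi]
  rw [dif_pos hcyc']
  set c := hcyc'.choose with hcdef
  have hc : c.IsCycle := hcyc'.choose_spec
  have hk3 : 3 ≤ c.length := hc.three_le_length
  have hMcard : G.edgeFinset.card = M := edgeFinset_card_of_ncard n M hGM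
  have hkM : c.length ≤ M := by
    have hedges : c.edges.toFinset ⊆ G.edgeFinset := by
      intro e he
      rw [List.mem_toFinset] at he
      rw [SimpleGraph.mem_edgeFinset]
      exact c.edges_subset_edgeSet he
    have hnd : c.edges.Nodup := hc.isCircuit.isTrail.edges_nodup
    have hlen : c.edges.toFinset.card = c.length := by
      rw [List.toFinset_card_of_nodup hnd, SimpleGraph.Walk.length_edges]
    calc c.length = c.edges.toFinset.card := hlen.symm
      _ ≤ G.edgeFinset.card := Finset.card_le_card hedges
      _ = M := hMcard
  rw [Finset.mem_sigma]
  constructor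
  · rw [Finset.mem_Icc]; exact ⟨hk3, hkM⟩
  · rw [Tk, Finset.mem_filter, Finset.mem_product]
    refine ⟨⟨?_, ?_⟩, ?_⟩
    · -- injectivity of the vertex function
      rw [Finset.mem_filter]
      refine ⟨Finset.mem_univ _, ?_⟩
      intro i j hij
      cases b with
      | true =>
        simp only [if_true] at hij
        exact Fin.ext (cyc_getVert_inj0 hc i.2 j.2 hij)
      | false =>
        simp only [Bool.false_eq_true, if_false] at hij
        have hi2 : i.1 < c.length := i.2
        have hj2 : j.1 < c.length := j.2
        have h1 := cyc_getVert_inj hc (by omega : 1 ≤ c.length - i.1)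
          (by omega) (by omega : 1 ≤ c.length - j.1) (by omega) hij
        exact Fin.ext (by omega)
    · rw [Finset.mem_powersetCard]
      exact ⟨SimpleGraph.edgeFinset_mono le_top, hMcard⟩
    · -- the cycle edges are edges of G
      intro e he
      rw [cycEdges, Finset.mem_image] at he
      obtain ⟨i, -, rfl⟩ := he
      have him : i.1 < c.length := i.2
      have hnext : (cycNext i).1 = (i.1 + 1) % c.length := rfl
      rw [SimpleGraph.mem_edgeFinset]
      rcases lt_or_ge (i.1 + 1) c.length with h1 | h1
      · have hval : (cycNext i).1 = i.1 + 1 := by rw [hnext, Nat.mod_eq_of_lt h1]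
        cases b with
        | true =>
          simp only [if_true]
          rw [hval, SimpleGraph.mem_edgeSet]
          exact c.adj_getVert_succ him
        | false =>
          simp only [Bool.false_eq_true, if_false]
          rw [hval, SimpleGraph.mem_edgeSet]
          have hm : c.length - (i.1 + 1) < c.length := by omega
          have hadj := c.adj_getVert_succ hm
          have hieq : c.length - (i.1 + 1) + 1 = c.length - i.1 := by omega
          rw [hieq] at hadj
          exact hadj.symm
      · have hieq : i.1 + 1 = c.length := by omega
        have hval : (cycNext i).1 = 0 := by rw [hnext, hieq, Nat.mod_self]
        cases b with
        | true =>
          simp only [if_true]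
          rw [hval, SimpleGraph.mem_edgeSet, SimpleGraph.Walk.getVert_zero]
          have hadj := c.adj_getVert_succ him
          rw [hieq, SimpleGraph.Walk.getVert_length] at hadj
          exact hadj
        | false =>
          simp only [Bool.false_eq_true, if_false]
          rw [hval, SimpleGraph.mem_edgeSet]
          have h2 : c.length - i.1 = 1 := by omega
          rw [h2, Nat.sub_zero, SimpleGraph.Walk.getVert_length]
          have hadj := c.adj_getVert_succ (show 0 < c.length by omega)
          rw [SimpleGraph.Walk.getVert_zero] at hadj
          exact hadj.symm

lemma phi_injOn : Set.InjOn (phi n) ↑((D0 n M) ×ˢ (Finset.univ : Finset Bool)) := by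
  rintro ⟨⟨G, v⟩, b⟩ hp ⟨⟨G', v'⟩, b'⟩ hq h
  rw [Finset.mem_coe, Finset.mem_product] at hp hq
  have hcyc : ∃ c : G.Walk v v, c.IsCycle :=
    (Finset.mem_filter.mp hp.1).2
  have hcyc' : ∃ c : G'.Walk v' v', c.IsCycle :=
    (Finset.mem_filter.mp hq.1).2
  simp only [phi] at h
  rw [dif_pos hcyc, dif_pos hcyc'] at h
  have hc : hcyc.choose.IsCycle := hcyc.choose_spec
  have hc' : hcyc'.choose.IsCycle := hcyc'.choose_spec
  have hk3 : 3 ≤ hcyc.choose.length := hc.three_le_length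
  have hk3' : 3 ≤ hcyc'.choose.length := hc'.three_le_length
  -- the edge sets agree, so the graphs agree
  have hA : G.edgeFinset = G'.edgeFinset :=
    congrArg (fun x : (Σ k : ℕ, (Fin k → Fin n) × Finset (Sym2 (Fin n))) => x.2.2) h
  have hGG : G = G' := by
    have h1 : G.edgeSet.toFinset = G'.edgeSet.toFinset := hA
    exact SimpleGraph.edgeSet_inj.mp (Set.toFinset_inj.mp h1)
  subst hGG
  -- the base vertices agree
  have hv : v = v' := by
    have h1 := congrArg (fun x : (Σ k : ℕ, (Fin k → Fin n) × Finset (Sym2 (Fin n))) =>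
      if hh : 0 < x.1 then some (x.2.1 ⟨0, hh⟩) else none) h
    dsimp only at h1
    rw [dif_pos (by omega : 0 < hcyc.choose.length),
      dif_pos (by omega : 0 < hcyc'.choose.length)] at h1
    have h2 := Option.some.inj h1
    have h3 : (if b = true then hcyc.choose.getVert 0
        else hcyc.choose.getVert (hcyc.choose.length - 0)) = v := by
      cases b <;> simp [SimpleGraph.Walk.getVert_length]
    have h4 : (if b' = true then hcyc'.choose.getVert 0
        else hcyc'.choose.getVert (hcyc'.choose.length - 0)) = v' := by
      cases b' <;> simp [SimpleGraph.Walk.getVert_length]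
    rw [h3, h4] at h2
    exact h2
  subst hv
  -- the chosen cycles agree
  have hcc : hcyc'.choose = hcyc.choose := congrArg Exists.choose (Subsingleton.elim hcyc' hcyc)
  -- now deduce the Booleans agree
  have hbb : b = b' := by
    have h1 := congrArg (fun x : (Σ k : ℕ, (Fin k → Fin n) × Finset (Sym2 (Fin n))) =>
      if hh : 1 < x.1 then some (x.2.1 ⟨1, hh⟩) else none) h
    dsimp only at h1
    rw [dif_pos (by omega : 1 < hcyc.choose.length),
      dif_pos (by omega : 1 < hcyc'.choose.length)] at h1
    have h2 := Option.some.inj h1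
    rw [hcc] at h2  -- may fail: dependent
    cases b <;> cases b' <;> simp only [if_true, Bool.false_eq_true, if_false] at h2 ⊢
    · -- b = false, b' = true : getVert (k-1) = getVert 1
      exfalso
      have h5 := cyc_getVert_inj hc (by omega : 1 ≤ hcyc.choose.length - 1) (by omega)
        (by omega : 1 ≤ (1:ℕ)) (by omega) h2
      omega
    · -- b = true, b' = false
      exfalso
      have h5 := cyc_getVert_inj hc (by omega : 1 ≤ (1:ℕ)) (by omega)
        (by omega : 1 ≤ hcyc.choose.length - 1) (by omega) h2
      omega
  rw [hbb]

lemma two_card_D0 :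
    (D0 n M).card * 2 ≤
      ∑ k ∈ Finset.Icc 3 M, n.descFactorial k * ((Uu n).card - k).choose (M - k) := by
  have h1 : (D0 n M).card * 2 = ((D0 n M) ×ˢ (Finset.univ : Finset Bool)).card := by
    rw [Finset.card_product]
    simp
  rw [h1]
  refine le_trans (Finset.card_le_card_of_injOn (phi n) (phi_mapsTo n M) (phi_injOn n M)) ?_
  rw [Finset.card_sigma]
  exact Finset.sum_le_sum fun k hk => card_Tk n M k (Finset.mem_Icc.mp hk).1

lemma diag_free (A : Finset (Sym2 (Fin n))) (hA : A ⊆ Uu n) :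
    (↑A : Set (Sym2 (Fin n))) \ {e | e.IsDiag} = ↑A := by
  ext e
  simp only [Set.mem_diff, Finset.mem_coe, Set.mem_setOf_eq, and_iff_left_iff_imp]
  intro he
  have h2 := hA he
  rw [SimpleGraph.mem_edgeFinset, SimpleGraph.edgeSet_top] at h2
  exact h2

lemma omg_card_lower : (Uu n).card.choose M ≤ (Omg n M).card := by
  rw [← Finset.card_powersetCard M (Uu n)]
  refine Finset.card_le_card_of_injOn (fun A => SimpleGraph.fromEdgeSet ↑A) ?_ ?_
  · intro A hA
    rw [Finset.mem_coe, Finset.mem_powersetCard] at hA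
    rw [Finset.mem_coe, Omg, Finset.mem_filter]
    refine ⟨Finset.mem_univ _, ?_⟩
    rw [SimpleGraph.edgeSet_fromEdgeSet, show (Sym2.diagSet : Set (Sym2 (Fin n))) = {e | e.IsDiag} from rfl,
      diag_free n A hA.1, Set.ncard_coe_finset, hA.2]
  · intro A hA B hB hAB
    rw [Finset.mem_coe, Finset.mem_powersetCard] at hA hB
    have hAB' : SimpleGraph.fromEdgeSet (↑A : Set (Sym2 (Fin n))) =
        SimpleGraph.fromEdgeSet (↑B : Set (Sym2 (Fin n))) := hAB
    have h1 := congrArg SimpleGraph.edgeSet hAB'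
    rw [SimpleGraph.edgeSet_fromEdgeSet, SimpleGraph.edgeSet_fromEdgeSet,
      show (Sym2.diagSet : Set (Sym2 (Fin n))) = {e | e.IsDiag} from rfl,
      diag_free n A hA.1, diag_free n B hB.1] at h1
    exact_mod_cast h1

lemma sum_eq_cardD0 :
    ∑ G ∈ Omg n M, (Finset.univ.filter fun v : Fin n =>
      ∃ c : G.Walk v v, c.IsCycle).card = (D0 n M).card := by
  rw [D0, card_product_filter _ _ (fun p : SimpleGraph (Fin n) × Fin n => ∃ c : p.1.Walk p.2 p.2, c.IsCycle)]

/-! ### Arithmetic -/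

lemma per_k (N : ℕ) (hn : 4 ≤ n) (h2M : 2 * M + 1 ≤ n) (hN : 2 * N = n * (n - 1)) :
    ∀ k, k ≤ M → (n.descFactorial k : ℝ) * ((N - k).choose (M - k)) ≤
      (2 * M / ((n : ℝ) - 1)) ^ k * (N.choose M) := by
  have hnr : (4:ℝ) ≤ (n:ℝ) := by exact_mod_cast hn
  have hn1 : (0:ℝ) < (n:ℝ) - 1 := by linarith
  have hMr : 2*(M:ℝ) + 1 ≤ (n:ℝ) := by exact_mod_cast h2M
  have h2N : 2*(N:ℝ) = (n:ℝ) * ((n:ℝ) - 1) := by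
    have h1 : ((2 * N : ℕ) : ℝ) = ((n * (n - 1) : ℕ) : ℝ) := congrArg (fun x : ℕ => (x:ℝ)) hN
    push_cast [Nat.cast_sub (by omega : 1 ≤ n)] at h1
    linarith
  have hMN : M ≤ N := by
    have h1 : 2*M ≤ n - 1 := by omega
    have h2 : 1*(2*M) ≤ n*(n-1) := Nat.mul_le_mul (by omega) h1
    omega
  set y : ℝ := 2 * M / ((n : ℝ) - 1) with hy
  have hy0 : (0:ℝ) ≤ y := by positivity
  intro k
  induction k with
  | zero => intro _; simp
  | succ k ih =>
    intro hk1
    have hkM : k < M := hk1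
    have hkn : k < n := by omega
    have hkN : k < N := lt_of_lt_of_le hkM hMN
    have IH := ih (le_of_lt hkM)
    have e1 : N - k - 1 + 1 = N - k := by omega
    have e2 : M - k - 1 + 1 = M - k := by omega
    have hid : (N - k) * ((N - (k+1)).choose (M - (k+1))) =
        ((N - k).choose (M - k)) * (M - k) := by
      have h3 := Nat.add_one_mul_choose_eq (N - k - 1) (M - k - 1)
      rw [e1, e2] at h3
      have e3 : N - (k+1) = N - k - 1 := by omega
      have e4 : M - (k+1) = M - k - 1 := by omega
      rw [e3, e4]
      exact h3
    have hcN : ((N - k : ℕ) : ℝ) = (N:ℝ) - k := by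
      push_cast [Nat.cast_sub (le_of_lt hkN)]; ring
    have hcM : ((M - k : ℕ) : ℝ) = (M:ℝ) - k := by
      push_cast [Nat.cast_sub (le_of_lt hkM)]; ring
    have hidR : ((N:ℝ) - k) * ((N - (k+1)).choose (M - (k+1)) : ℝ) =
        ((N - k).choose (M - k) : ℝ) * ((M:ℝ) - k) := by
      have h4 : (((N - k) * ((N - (k+1)).choose (M - (k+1))) : ℕ) : ℝ) =
          ((((N - k).choose (M - k)) * (M - k) : ℕ) : ℝ) := congrArg (fun x : ℕ => (x:ℝ)) hid
      push_cast at h4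
      rw [hcN, hcM] at h4
      exact h4
    have hdsucc : (n.descFactorial (k+1) : ℝ) = ((n:ℝ) - k) * (n.descFactorial k : ℝ) := by
      rw [Nat.descFactorial_succ]
      push_cast [Nat.cast_sub (le_of_lt hkn)]
      ring
    have hNk : (0:ℝ) < ((N:ℝ) - k) := by
      have : (k:ℝ) < (N:ℝ) := by exact_mod_cast hkN
      linarith
    have hkMr : (k:ℝ) + 1 ≤ (M:ℝ) := by exact_mod_cast hkM
    have hknr : (k:ℝ) + 1 ≤ (n:ℝ) := by exact_mod_cast hkn
    have hfac : ((n:ℝ) - k) * ((M:ℝ) - k) ≤ y * ((N:ℝ) - k) := by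
      rw [hy, div_mul_eq_mul_div, le_div_iff₀ hn1]
      have hk0 : (0:ℝ) ≤ (k:ℝ) := Nat.cast_nonneg _
      have hnk1 : (1:ℝ) ≤ (n:ℝ) + (M:ℝ) - k := by linarith
      have hkey : 2*(M:ℝ) ≤ ((n:ℝ)-1) * ((n:ℝ) + (M:ℝ) - k) := by
        have h5 : ((n:ℝ)-1) * 1 ≤ ((n:ℝ)-1) * ((n:ℝ)+(M:ℝ)-(k:ℝ)) :=
          mul_le_mul_of_nonneg_left hnk1 (by linarith)
        linarith
      have hexp : 2*(M:ℝ)*((N:ℝ)-(k:ℝ)) - ((n:ℝ)-(k:ℝ))*((M:ℝ)-(k:ℝ))*((n:ℝ)-1) =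
          (k:ℝ)*(((n:ℝ)-1)*((n:ℝ)+(M:ℝ)-(k:ℝ)) - 2*(M:ℝ)) +
            (M:ℝ)*(2*(N:ℝ) - (n:ℝ)*((n:ℝ)-1)) := by ring
      have h6 : (M:ℝ)*(2*(N:ℝ) - (n:ℝ)*((n:ℝ)-1)) = 0 := by rw [h2N]; ring
      have h7 : (0:ℝ) ≤ (k:ℝ)*(((n:ℝ)-1)*((n:ℝ)+(M:ℝ)-(k:ℝ)) - 2*(M:ℝ)) :=
        mul_nonneg hk0 (sub_nonneg.mpr hkey)
      linarith
    have hdk0 : (0:ℝ) ≤ (n.descFactorial k : ℝ) := Nat.cast_nonneg _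
    have hnk0 : (0:ℝ) ≤ (n:ℝ) - k := by linarith
    have hMk0 : (0:ℝ) ≤ (M:ℝ) - k := by linarith
    have hch0 : (0:ℝ) ≤ (N.choose M : ℝ) := Nat.cast_nonneg _
    have step : (n.descFactorial (k+1) : ℝ) * ((N - (k+1)).choose (M - (k+1)) : ℝ) * ((N:ℝ) - k)
        ≤ y^(k+1) * (N.choose M : ℝ) * ((N:ℝ) - k) := by
      calc (n.descFactorial (k+1) : ℝ) * ((N - (k+1)).choose (M - (k+1)) : ℝ) * ((N:ℝ) - k)
          = (((n:ℝ)-k) * ((M:ℝ)-k)) * ((n.descFactorial k : ℝ) * ((N - k).choose (M - k) : ℝ)) := by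
            rw [hdsucc]
            linear_combination ((n:ℝ)-(k:ℝ)) * (n.descFactorial k : ℝ) * hidR
        _ ≤ (((n:ℝ)-k) * ((M:ℝ)-k)) * ((2 * M / ((n : ℝ) - 1)) ^ k * (N.choose M : ℝ)) :=
            mul_le_mul_of_nonneg_left IH (mul_nonneg hnk0 hMk0)
        _ = (((n:ℝ)-k) * ((M:ℝ)-k)) * (y ^ k * (N.choose M : ℝ)) := by rw [← hy]
        _ ≤ (y * ((N:ℝ)-k)) * (y ^ k * (N.choose M : ℝ)) :=
            mul_le_mul_of_nonneg_right hfac (mul_nonneg (pow_nonneg hy0 _) hch0)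
        _ = y^(k+1) * (N.choose M : ℝ) * ((N:ℝ) - k) := by ring
    have := le_of_mul_le_mul_right step hNk
    rw [hy] at this
    exact this

lemma geom_bound (hn : 4 ≤ n) (h2M : 2 * M + 1 ≤ n) :
    ∑ k ∈ Finset.Icc 3 M, (2 * (M : ℝ) / ((n : ℝ) - 1)) ^ k ≤
      2 * ((n : ℝ) - 3) / ((n : ℝ) - 2 * M) := by
  have hnr : (4:ℝ) ≤ (n:ℝ) := by exact_mod_cast hn
  have hMr : 2*(M:ℝ) + 1 ≤ (n:ℝ) := by exact_mod_cast h2M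
  set y : ℝ := 2 * (M:ℝ) / ((n : ℝ) - 1) with hy
  have hn1 : (0:ℝ) < (n:ℝ) - 1 := by linarith
  have hy0 : (0:ℝ) ≤ y := by positivity
  have hy1 : y ≤ 1 := by rw [hy, div_le_one hn1]; linarith
  have hT : (0:ℝ) < (n:ℝ) - 2*M := by linarith
  have hRHS0 : (0:ℝ) ≤ 2*((n:ℝ)-3)/((n:ℝ)-2*M) := by
    apply div_nonneg _ (le_of_lt hT)
    linarith
  rcases lt_or_ge M 3 with hM3 | hM3
  · rw [Finset.Icc_eq_empty (by omega)]
    simpa using hRHS0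
  · have hM3r : (3:ℝ) ≤ (M:ℝ) := by exact_mod_cast hM3
    rcases le_or_gt (n - 2*M) 2 with hT2 | hT2
    · have hsum1 : ∑ k ∈ Finset.Icc 3 M, y^k ≤ ∑ k ∈ Finset.Icc 3 M, (1:ℝ) :=
        Finset.sum_le_sum fun k _ => pow_le_one₀ hy0 hy1
      have hcard : ∑ k ∈ Finset.Icc 3 M, (1:ℝ) = ((M - 2 : ℕ) : ℝ) := by
        rw [Finset.sum_const, Nat.card_Icc, nsmul_eq_mul, mul_one]
        congr 1
      have h1 : ((M - 2 : ℕ) : ℝ) ≤ (M:ℝ) := by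
        have h2 : (M - 2 : ℕ) ≤ M := by omega
        exact_mod_cast h2
      have hTr2 : (n:ℝ) ≤ 2*(M:ℝ) + 2 := by
        have h3 : n ≤ 2*M + 2 := by omega
        exact_mod_cast h3
      have h2 : (n:ℝ) - 3 ≤ 2*((n:ℝ)-3)/((n:ℝ)-2*M) := by
        rw [le_div_iff₀ hT]
        nlinarith
      have h3 : (M:ℝ) ≤ (n:ℝ) - 3 := by linarith
      calc ∑ k ∈ Finset.Icc 3 M, y^k ≤ ((M - 2 : ℕ) : ℝ) := by rw [← hcard]; exact hsum1
        _ ≤ (M:ℝ) := h1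
        _ ≤ (n:ℝ) - 3 := h3
        _ ≤ 2*((n:ℝ)-3)/((n:ℝ)-2*M) := h2
    · have hTr3 : 2*(M:ℝ) + 3 ≤ (n:ℝ) := by
        have h3 : 2*M + 3 ≤ n := by omega
        exact_mod_cast h3
      have hylt : y < 1 := by rw [hy, div_lt_one hn1]; linarith
      have h1y : (0:ℝ) < 1 - y := by linarith
      have hmap : Finset.Icc 3 M =
          Finset.map ⟨fun j => j + 3, fun a b h => by have h' : a + 3 = b + 3 := h; omega⟩
            (Finset.range (M - 2)) := by
        ext x
        simp only [Finset.mem_Icc, Finset.mem_map, Finset.mem_range,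
          Function.Embedding.coeFn_mk]
        constructor
        · intro hx
          refine ⟨x - 3, by omega, ?_⟩
          show x - 3 + 3 = x
          omega
        · rintro ⟨j, hj, hx⟩
          have hx' : j + 3 = x := hx
          omega
      have hre : ∑ k ∈ Finset.Icc 3 M, y^k = y^3 * ∑ j ∈ Finset.range (M - 2), y^j := by
        rw [hmap, Finset.sum_map, Finset.mul_sum]
        refine Finset.sum_congr rfl fun j _ => ?_
        show y ^ (j + 3) = y ^ 3 * y ^ j
        ring
      have hgeom : ∑ j ∈ Finset.range (M - 2), y^j ≤ 1/(1-y) := by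
        have hne : y ≠ 1 := by linarith
        rw [geom_sum_eq hne]
        have heq2 : (y^(M-2) - 1)/(y - 1) = (1 - y^(M-2))/(1 - y) := by
          rw [← neg_sub (1:ℝ) (y^(M-2)), ← neg_sub (1:ℝ) y, neg_div_neg_eq]
        rw [heq2]
        refine (div_le_div_iff_of_pos_right h1y).mpr ?_
        have := pow_nonneg hy0 (M-2)
        linarith
      have hn1ne : ((n:ℝ) - 1) ≠ 0 := ne_of_gt hn1
      have hd2 : (0:ℝ) < (n:ℝ)-1-2*M := by linarith
      have hd2ne : ((n:ℝ)-1-2*M) ≠ 0 := ne_of_gt hd2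
      calc ∑ k ∈ Finset.Icc 3 M, y^k
          = y^3 * ∑ j ∈ Finset.range (M-2), y^j := hre
        _ ≤ y^3 * (1/(1-y)) := mul_le_mul_of_nonneg_left hgeom (pow_nonneg hy0 3)
        _ = y^3 / (1-y) := by ring
        _ ≤ (((n:ℝ)-3)/((n:ℝ)-1))^3 / (((n:ℝ)-1-2*M)/((n:ℝ)-1)) := by
            have hyb : y ≤ ((n:ℝ)-3)/((n:ℝ)-1) := by
              rw [hy, div_le_div_iff₀ hn1 hn1]
              nlinarith
            have h1ye : 1 - y = ((n:ℝ)-1-2*M)/((n:ℝ)-1) := by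
              rw [hy]; field_simp
            rw [h1ye]
            have hd : (0:ℝ) < ((n:ℝ)-1-2*M)/((n:ℝ)-1) := div_pos hd2 hn1
            exact (div_le_div_iff_of_pos_right hd).mpr (pow_le_pow_left₀ hy0 hyb 3)
        _ = ((n:ℝ)-3)^3 / (((n:ℝ)-1)^2 * ((n:ℝ)-1-2*M)) := by
            field_simp
        _ ≤ 2*((n:ℝ)-3)/((n:ℝ)-2*M) := by
            rw [div_le_div_iff₀ (mul_pos (pow_pos hn1 2) hd2) hT]
            have hA : ((n:ℝ)-3)^2 ≤ ((n:ℝ)-1)^2 := by nlinarith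
            have hB : (n:ℝ)-2*M ≤ 2*(((n:ℝ)-1-2*M)) := by linarith
            have hC : ((n:ℝ)-3)^2 * ((n:ℝ)-2*M) ≤ ((n:ℝ)-1)^2 * (2*(((n:ℝ)-1-2*M))) :=
              mul_le_mul hA hB (by linarith) (by positivity)
            nlinarith [mul_le_mul_of_nonneg_left hC (by linarith : (0:ℝ) ≤ (n:ℝ)-3)]

end Stmt17

theorem stmt_17 (n M : ℕ) (s : ℝ) (hs : 0 < s) (hn : 4 ≤ n)
    (hM : (M : ℝ) ≤ (n : ℝ) / 2 - s) :
    (∑ G ∈ Finset.univ.filter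
        (fun G : SimpleGraph (Fin n) => G.edgeSet.ncard = M),
        (({v : Fin n | ∃ c : G.Walk v v, c.IsCycle}).ncard : ℝ)) /
      ((Finset.univ.filter
        (fun G : SimpleGraph (Fin n) => G.edgeSet.ncard = M)).card : ℝ)
      ≤ (1 / 2) * ((n : ℝ) - 3) / s := by
  have hnr : (4:ℝ) ≤ (n:ℝ) := by exact_mod_cast hn
  have hs2 : (M:ℝ) < (n:ℝ)/2 := by linarith
  have h2M : 2 * M + 1 ≤ n := by
    have h1 : (2*M : ℝ) < (n:ℝ) := by linarith
    have h2 : (2*M : ℕ) < n := by exact_mod_cast h1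
    omega
  have hRHS0 : (0:ℝ) ≤ 1 / 2 * ((n:ℝ) - 3) / s := by
    apply div_nonneg _ (le_of_lt hs)
    nlinarith
  -- the number of potential edges
  set NN := (Stmt17.Uu n).card with hNN
  have hNval : NN = n.choose 2 := by
    rw [hNN, Stmt17.Uu, SimpleGraph.card_edgeFinset_top_eq_card_choose_two, Fintype.card_fin]
  have hN2 : 2 * NN = n * (n - 1) := by
    have heven : Even ((n-1) * ((n-1) + 1)) := Nat.even_mul_succ_self (n-1)
    have hmul : (n-1) * ((n-1)+1) = n * (n-1) := by
      have : (n-1) + 1 = n := by omega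
      rw [this]; ring
    rw [hNval, Nat.choose_two_right]
    obtain ⟨t, ht⟩ := heven
    rw [hmul] at ht
    omega
  -- identify the sum with a cardinality of pairs
  have hnum : ∀ G : SimpleGraph (Fin n),
      ({v : Fin n | ∃ c : G.Walk v v, c.IsCycle}).ncard =
        (Finset.univ.filter fun v : Fin n => ∃ c : G.Walk v v, c.IsCycle).card := by
    intro G
    rw [Set.ncard_eq_toFinset_card', Set.toFinset_setOf]
  have hsum0 : ∑ G ∈ Finset.univ.filter
        (fun G : SimpleGraph (Fin n) => G.edgeSet.ncard = M),
        (({v : Fin n | ∃ c : G.Walk v v, c.IsCycle}).ncard : ℝ) =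
      ((Stmt17.D0 n M).card : ℝ) := by
    rw [← Stmt17.sum_eq_cardD0 n M]
    push_cast
    refine Finset.sum_congr rfl fun G _ => ?_
    rw [hnum G]
  -- the main counting bound
  have hcount : ((Stmt17.D0 n M).card : ℝ) * 2 ≤
      ∑ k ∈ Finset.Icc 3 M, (n.descFactorial k : ℝ) * (((NN - k).choose (M - k) : ℕ) : ℝ) := by
    have h1 := Stmt17.two_card_D0 n M
    have h2 : (((Stmt17.D0 n M).card * 2 : ℕ) : ℝ) ≤
        ((∑ k ∈ Finset.Icc 3 M, n.descFactorial k * ((NN - k).choose (M - k)) : ℕ) : ℝ) := by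
      exact_mod_cast h1
    push_cast at h2
    exact_mod_cast h2
  -- per-term bound
  have hperk : ∑ k ∈ Finset.Icc 3 M, (n.descFactorial k : ℝ) * (((NN - k).choose (M - k) : ℕ) : ℝ) ≤
      (∑ k ∈ Finset.Icc 3 M, (2 * (M:ℝ) / ((n:ℝ) - 1)) ^ k) * ((NN.choose M : ℕ) : ℝ) := by
    rw [Finset.sum_mul]
    refine Finset.sum_le_sum fun k hk => ?_
    exact Stmt17.per_k n M NN hn h2M hN2 k (Finset.mem_Icc.mp hk).2
  have hgeo := Stmt17.geom_bound n M hn h2M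
  have hchoose0 : (0:ℝ) ≤ ((NN.choose M : ℕ) : ℝ) := Nat.cast_nonneg _
  have hT : (0:ℝ) < (n:ℝ) - 2*M := by
    have : (2*M+1 : ℝ) ≤ (n:ℝ) := by exact_mod_cast h2M
    linarith
  have homg := Stmt17.omg_card_lower n M
  have homgR : ((NN.choose M : ℕ) : ℝ) ≤
      ((Finset.univ.filter (fun G : SimpleGraph (Fin n) => G.edgeSet.ncard = M)).card : ℝ) := by
    exact_mod_cast homg
  have hfrac : 2*((n:ℝ)-3)/((n:ℝ)-2*M) ≤ ((n:ℝ)-3)/s * 1 := by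
    rw [mul_one]
    have h2s : 2*s ≤ (n:ℝ) - 2*M := by linarith
    have h1 : ((n:ℝ)-3)/((n:ℝ)-2*M) ≤ ((n:ℝ)-3)/(2*s) :=
      div_le_div_of_nonneg_left (by linarith) (by linarith) h2s
    have h2 : ((n:ℝ)-3)/(2*s) = ((n:ℝ)-3)/s/2 := by ring
    have h3 : 2*((n:ℝ)-3)/((n:ℝ)-2*M) = 2*(((n:ℝ)-3)/((n:ℝ)-2*M)) := by ring
    linarith [h1, h2.le, h2.ge, h3.le, h3.ge]
  -- put everything together
  set Den := ((Finset.univ.filter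
      (fun G : SimpleGraph (Fin n) => G.edgeSet.ncard = M)).card : ℝ) with hDen
  have hDen0 : (0:ℝ) ≤ Den := Nat.cast_nonneg _
  rcases eq_or_lt_of_le hDen0 with hD | hD
  · -- denominator zero
    rw [div_eq_mul_inv, ← hD, inv_zero, mul_zero]
    exact hRHS0
  · rw [div_le_iff₀ hD]
    rw [hsum0]
    have hchain : ((Stmt17.D0 n M).card : ℝ) * 2 ≤ (2*((n:ℝ)-3)/((n:ℝ)-2*M)) * Den := by
      calc ((Stmt17.D0 n M).card : ℝ) * 2
          ≤ ∑ k ∈ Finset.Icc 3 M, (n.descFactorial k : ℝ) * (((NN - k).choose (M - k) : ℕ) : ℝ) :=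
            hcount
        _ ≤ (∑ k ∈ Finset.Icc 3 M, (2 * (M:ℝ) / ((n:ℝ) - 1)) ^ k) * ((NN.choose M : ℕ) : ℝ) :=
            hperk
        _ ≤ (2*((n:ℝ)-3)/((n:ℝ)-2*M)) * ((NN.choose M : ℕ) : ℝ) :=
            mul_le_mul_of_nonneg_right hgeo hchoose0
        _ ≤ (2*((n:ℝ)-3)/((n:ℝ)-2*M)) * Den := by
            apply mul_le_mul_of_nonneg_left homgR
            apply div_nonneg (by linarith) (le_of_lt hT)
    have hfin : (2*((n:ℝ)-3)/((n:ℝ)-2*M)) * Den ≤ (((n:ℝ)-3)/s) * Den :=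
      mul_le_mul_of_nonneg_right (by linarith [hfrac]) hDen0
    have hgoal : ((Stmt17.D0 n M).card : ℝ) ≤ (1 / 2 * ((n:ℝ) - 3) / s) * Den := by
      have h1 : ((Stmt17.D0 n M).card : ℝ) * 2 ≤ (((n:ℝ)-3)/s) * Den := le_trans hchain hfin
      have h2 : (1 / 2 * ((n:ℝ) - 3) / s) * Den = ((((n:ℝ)-3)/s) * Den)/2 := by ring
      linarith
    exact hgoal
end
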